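/- Let B ⊆ P be a faithfully flat H-Hopf–Galois extension with translation map τ(h) = h⁽¹⁾ ⊗_B h⁽²⁾. If P is a *-algebra and H is a Hopf *-algebra such that the coaction δ_R: P → P ⊗ H is a *-map (unitary), then for all h ∈ H: (h*)⁽¹⁾ ⊗_B (h*)⁽²⁾ = (S⁻¹(h)⁽²⁾)* ⊗_B (S⁻¹(h)⁽¹⁾)*. -/
import Mathlib


open TensorProduct

set_option maxHeartbeats 1000000
set_option synthInstance.maxHeartbeats 400000

noncomputable section

variable (H : Type) [Ring H] [HopfAlgebra ℂ H] [StarRing H] [StarModule ℂ H]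
variable (P : Type) [Ring P] [Algebra ℂ P] [StarRing P] [StarModule ℂ P]
variable (coact : P →ₗ[ℂ] P ⊗[ℂ] H)

/-- The (lift of the) canonical Galois map `q ⊗ p ↦ q p₍₀₎ ⊗ p₍₁₎`. -/
def galF : P ⊗[ℂ] P →ₗ[ℂ] P ⊗[ℂ] H :=
  (TensorProduct.map (LinearMap.mul' ℂ P) (LinearMap.id : H →ₗ[ℂ] H)) ∘ₗ
  (TensorProduct.assoc ℂ P P H).symm.toLinearMap ∘ₗ
  (TensorProduct.map (LinearMap.id : P →ₗ[ℂ] P) coact)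

/-- The submodule of relations defining `P ⊗_B P`, where `B = P^{coH}` is the coinvariant
subalgebra. -/
def coinvRel : Submodule ℂ (P ⊗[ℂ] P) :=
  Submodule.span ℂ
    {z | ∃ p q b : P, coact b = b ⊗ₜ[ℂ] (1 : H) ∧
      z = (p * b) ⊗ₜ[ℂ] q - p ⊗ₜ[ℂ] (b * q)}

/-- Let `B ⊆ P` be a faithfully flat `H`-Hopf–Galois extension with
translation map `τ(h) = h⁽¹⁾ ⊗_B h⁽²⁾`.  If `P` is a `*`-algebra and `H` a Hopf `*`-algebra
such that the coaction is unitary, then for all `h ∈ H`,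
`(h*)⁽¹⁾ ⊗_B (h*)⁽²⁾ = (S⁻¹(h)⁽²⁾)* ⊗_B (S⁻¹(h)⁽¹⁾)*`. -/
theorem translation_map_star
    (Sinv : H →ₗ[ℂ] H)
    (hSinv₁ : ∀ h : H, Sinv (HopfAlgebra.antipode (R := ℂ) h) = h)
    (hSinv₂ : ∀ h : H, HopfAlgebra.antipode (R := ℂ) (Sinv h) = h)
    -- H is a Hopf `*`-algebra
    (sHH : H ⊗[ℂ] H → H ⊗[ℂ] H)
    (hsHH_add : ∀ u v : H ⊗[ℂ] H, sHH (u + v) = sHH u + sHH v)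
    (hsHH_smul : ∀ (c : ℂ) (u : H ⊗[ℂ] H), sHH (c • u) = (starRingEnd ℂ c) • sHH u)
    (hsHH_tmul : ∀ x y : H, sHH (x ⊗ₜ[ℂ] y) = star x ⊗ₜ[ℂ] star y)
    (hcomul_star : ∀ h : H,
      Coalgebra.comul (R := ℂ) (star h) = sHH (Coalgebra.comul (R := ℂ) h))
    (hSstar : ∀ h : H,
      HopfAlgebra.antipode (R := ℂ) (star (HopfAlgebra.antipode (R := ℂ) (star h))) = h)
    -- P is a right H-comodule algebra
    (hcoassoc : ∀ p : P,
      (TensorProduct.assoc ℂ P H H)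
          ((TensorProduct.map coact (LinearMap.id : H →ₗ[ℂ] H)) (coact p)) =
        (TensorProduct.map (LinearMap.id : P →ₗ[ℂ] P) (Coalgebra.comul (R := ℂ))) (coact p))
    (hcounit : ∀ p : P,
      (TensorProduct.rid ℂ P)
        ((TensorProduct.map (LinearMap.id : P →ₗ[ℂ] P) (Coalgebra.counit (R := ℂ)))
          (coact p)) = p)
    (hcoact_alg : ∀ p q : P, coact (p * q) = coact p * coact q)
    (hcoact_one : coact 1 = 1)
    -- the coaction is unitary (a `*`-map)
    (sPH : P ⊗[ℂ] H → P ⊗[ℂ] H)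
    (hsPH_add : ∀ u v : P ⊗[ℂ] H, sPH (u + v) = sPH u + sPH v)
    (hsPH_smul : ∀ (c : ℂ) (u : P ⊗[ℂ] H), sPH (c • u) = (starRingEnd ℂ c) • sPH u)
    (hsPH_tmul : ∀ (p : P) (h : H), sPH (p ⊗ₜ[ℂ] h) = star p ⊗ₜ[ℂ] star h)
    (hcoact_star : ∀ p : P, coact (star p) = sPH (coact p))
    -- the star-flip map `p ⊗ q ↦ q* ⊗ p*` on `P ⊗ P`
    (sflip : P ⊗[ℂ] P → P ⊗[ℂ] P)
    (hsflip_add : ∀ u v : P ⊗[ℂ] P, sflip (u + v) = sflip u + sflip v)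
    (hsflip_smul : ∀ (c : ℂ) (u : P ⊗[ℂ] P), sflip (c • u) = (starRingEnd ℂ c) • sflip u)
    (hsflip_tmul : ∀ p q : P, sflip (p ⊗ₜ[ℂ] q) = star q ⊗ₜ[ℂ] star p)
    -- the Hopf–Galois condition: the canonical map is bijective
    (χ : ((P ⊗[ℂ] P) ⧸ coinvRel H P coact) →ₗ[ℂ] P ⊗[ℂ] H)
    (hχ : ∀ x : P ⊗[ℂ] P, χ ((coinvRel H P coact).mkQ x) = galF H P coact x)
    (hbij : Function.Bijective χ)
    -- the translation map
    (τ : H →ₗ[ℂ] ((P ⊗[ℂ] P) ⧸ coinvRel H P coact))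
    (hτ : ∀ h : H, χ (τ h) = (1 : P) ⊗ₜ[ℂ] h) :
    ∀ (h : H) (rep : P ⊗[ℂ] P),
      (coinvRel H P coact).mkQ rep = τ (Sinv h) →
        (coinvRel H P coact).mkQ (sflip rep) = τ (star h) := by
  intro h rep hrep
  classical
  set S : H →ₗ[ℂ] H := HopfAlgebra.antipode (R := ℂ) with hSdef
  set Θ : H ⊗[ℂ] H →ₗ[ℂ] H := LinearMap.mul' ℂ H ∘ₗ LinearMap.lTensor H S with hΘdef
  have hΘ_tmul : ∀ a b : H, Θ (a ⊗ₜ[ℂ] b) = a * S b := by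
    intro a b; simp [hΘdef]
  set Ψ : P ⊗[ℂ] (H ⊗[ℂ] H) →ₗ[ℂ] P ⊗[ℂ] H :=
    TensorProduct.map (LinearMap.id : P →ₗ[ℂ] P) Θ with hΨdef
  set Φ : P ⊗[ℂ] H →ₗ[ℂ] P ⊗[ℂ] H :=
    Ψ ∘ₗ (TensorProduct.assoc ℂ P H H).toLinearMap ∘ₗ
      (TensorProduct.map coact (LinearMap.id : H →ₗ[ℂ] H)) with hΦdef
  set ι : P →ₗ[ℂ] P ⊗[ℂ] H :=
    (TensorProduct.map (LinearMap.id : P →ₗ[ℂ] P) (Algebra.linearMap ℂ H)) ∘ₗ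
      (TensorProduct.rid ℂ P).symm.toLinearMap with hιdef
  have hι : ∀ p : P, ι p = p ⊗ₜ[ℂ] (1 : H) := by
    intro p; simp [hιdef, Algebra.TensorProduct.one_def]
  set Ξ : P ⊗[ℂ] P →ₗ[ℂ] P ⊗[ℂ] H :=
    LinearMap.mul' ℂ (P ⊗[ℂ] H) ∘ₗ TensorProduct.map coact ι with hΞdef
  have hΞ_tmul : ∀ q p : P, Ξ (q ⊗ₜ[ℂ] p) = coact q * (p ⊗ₜ[ℂ] (1 : H)) := by
    intro q p; simp [hΞdef, hι]
  -- key multiplicativity sub-claim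
  have S1 : ∀ (v w : P ⊗[ℂ] H) (g : H),
      Ψ ((TensorProduct.assoc ℂ P H H) ((v * w) ⊗ₜ[ℂ] g)) =
        v * Ψ ((TensorProduct.assoc ℂ P H H) (w ⊗ₜ[ℂ] g)) := by
    intro v w g
    induction v using TensorProduct.induction_on with
    | zero => simp
    | add v₁ v₂ ih₁ ih₂ =>
      simp only [add_mul, TensorProduct.add_tmul, map_add, ih₁, ih₂]
    | tmul c k =>
      induction w using TensorProduct.induction_on with
      | zero => simp
      | add w₁ w₂ ih₁ ih₂ =>
        simp only [mul_add, TensorProduct.add_tmul, map_add, ih₁, ih₂]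
      | tmul a g' =>
        simp [Algebra.TensorProduct.tmul_mul_tmul, hΨdef, hΘ_tmul, mul_assoc]
  -- Claim 1
  have C1 : ∀ (q : P) (u : P ⊗[ℂ] H),
      Φ ((TensorProduct.map (LinearMap.mul' ℂ P) (LinearMap.id : H →ₗ[ℂ] H))
          ((TensorProduct.assoc ℂ P P H).symm (q ⊗ₜ[ℂ] u))) =
        coact q * Ψ ((TensorProduct.assoc ℂ P H H)
          ((TensorProduct.map coact (LinearMap.id : H →ₗ[ℂ] H)) u)) := by
    intro q u
    induction u using TensorProduct.induction_on with
    | zero => simp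
    | add u₁ u₂ ih₁ ih₂ =>
      simp only [TensorProduct.tmul_add, map_add, mul_add] at ih₁ ih₂ ⊢
      rw [ih₁, ih₂]
    | tmul a g =>
      have h1 : (TensorProduct.assoc ℂ P P H).symm (q ⊗ₜ[ℂ] (a ⊗ₜ[ℂ] g))
          = (q ⊗ₜ[ℂ] a) ⊗ₜ[ℂ] g := rfl
      rw [h1]
      have h2 : (TensorProduct.map (LinearMap.mul' ℂ P) (LinearMap.id : H →ₗ[ℂ] H))
          ((q ⊗ₜ[ℂ] a) ⊗ₜ[ℂ] g) = (q * a) ⊗ₜ[ℂ] g := by simp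
      rw [h2, hΦdef]
      simp only [LinearMap.coe_comp, Function.comp_apply, LinearEquiv.coe_coe,
        TensorProduct.map_tmul, LinearMap.id_coe, id_eq]
      rw [hcoact_alg q a]
      exact S1 (coact q) (coact a) g
  -- Claim 2 : Ψ ∘ (id ⊗ comul) = id ⊗ (unit ∘ counit)
  have C2 : ∀ u : P ⊗[ℂ] H,
      Ψ ((TensorProduct.map (LinearMap.id : P →ₗ[ℂ] P) (Coalgebra.comul (R := ℂ))) u) =
        (TensorProduct.map (LinearMap.id : P →ₗ[ℂ] P)
          ((Algebra.linearMap ℂ H) ∘ₗ (Coalgebra.counit (R := ℂ)))) u := by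
    intro u
    induction u using TensorProduct.induction_on with
    | zero => simp
    | add u₁ u₂ ih₁ ih₂ => simp [ih₁, ih₂]
    | tmul a g =>
      simp only [TensorProduct.map_tmul, LinearMap.id_coe, id_eq, hΨdef,
        LinearMap.coe_comp, Function.comp_apply]
      congr 1
      have := HopfAlgebra.mul_antipode_lTensor_comul_apply (R := ℂ) (A := H) g
      simpa [hΘdef, hSdef] using this
  -- Claim 3 : (id ⊗ (unit ∘ counit)) (coact p) = p ⊗ 1
  have C3 : ∀ p : P,
      (TensorProduct.map (LinearMap.id : P →ₗ[ℂ] P)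
        ((Algebra.linearMap ℂ H) ∘ₗ (Coalgebra.counit (R := ℂ)))) (coact p) =
        p ⊗ₜ[ℂ] (1 : H) := by
    intro p
    have hsplit : (TensorProduct.map (LinearMap.id : P →ₗ[ℂ] P)
        ((Algebra.linearMap ℂ H) ∘ₗ (Coalgebra.counit (R := ℂ) (A := H)))) =
        (TensorProduct.map (LinearMap.id : P →ₗ[ℂ] P) (Algebra.linearMap ℂ H)) ∘ₗ
        (TensorProduct.map (LinearMap.id : P →ₗ[ℂ] P) (Coalgebra.counit (R := ℂ) (A := H))) :=
      by
      apply TensorProduct.ext'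
      intro a g
      simp
    rw [hsplit]
    have hy : (TensorProduct.map (LinearMap.id : P →ₗ[ℂ] P) (Coalgebra.counit (R := ℂ)))
        (coact p) = p ⊗ₜ[ℂ] (1 : ℂ) := by
      have := hcounit p
      have h2 := congrArg (TensorProduct.rid ℂ P).symm this
      rw [LinearEquiv.symm_apply_apply] at h2
      rw [h2]; rfl
    simp [hy]
  -- Lemma A : Φ ∘ galF = Ξ
  have hA : ∀ x : P ⊗[ℂ] P, Φ (galF H P coact x) = Ξ x := by
    intro x
    induction x using TensorProduct.induction_on with
    | zero => simp
    | add x₁ x₂ ih₁ ih₂ => simp [ih₁, ih₂]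
    | tmul q p =>
      have hg : galF H P coact (q ⊗ₜ[ℂ] p) =
          (TensorProduct.map (LinearMap.mul' ℂ P) (LinearMap.id : H →ₗ[ℂ] H))
            ((TensorProduct.assoc ℂ P P H).symm (q ⊗ₜ[ℂ] coact p)) := by
        simp [galF]
      rw [hg, C1 q (coact p), hcoassoc p, C2 (coact p), C3 p, hΞ_tmul]
  -- zero values of the star maps
  have hsflip0 : sflip 0 = 0 := by
    have := hsflip_smul 0 0; simpa using this
  have hsPH0 : sPH 0 = 0 := by
    have := hsPH_smul 0 0; simpa using this
  -- Lemma B : galF ∘ sflip = sPH ∘ Ξ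
  have hB : ∀ x : P ⊗[ℂ] P, galF H P coact (sflip x) = sPH (Ξ x) := by
    intro x
    induction x using TensorProduct.induction_on with
    | zero => rw [hsflip0]; simp [hsPH0]
    | add x₁ x₂ ih₁ ih₂ => rw [hsflip_add, map_add, map_add, hsPH_add, ih₁, ih₂]
    | tmul q p =>
      rw [hsflip_tmul, hΞ_tmul]
      have hg : galF H P coact (star p ⊗ₜ[ℂ] star q) =
          (TensorProduct.map (LinearMap.mul' ℂ P) (LinearMap.id : H →ₗ[ℂ] H))
            ((TensorProduct.assoc ℂ P P H).symm (star p ⊗ₜ[ℂ] coact (star q))) := by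
        simp [galF]
      rw [hg, hcoact_star q]
      -- sub-claim by induction on coact q
      generalize coact q = v
      induction v using TensorProduct.induction_on with
      | zero => rw [hsPH0]; simp [hsPH0]
      | add v₁ v₂ ih₁ ih₂ =>
        rw [hsPH_add, TensorProduct.tmul_add, map_add, map_add, ih₁, ih₂,
          add_mul, hsPH_add]
      | tmul a g =>
        rw [hsPH_tmul, Algebra.TensorProduct.tmul_mul_tmul, mul_one, hsPH_tmul,
          star_mul]
        rfl
  -- compute galF rep
  have hrep' : galF H P coact rep = (1 : P) ⊗ₜ[ℂ] (Sinv h) := by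
    rw [← hχ, hrep, hτ]
  -- compute Φ (1 ⊗ Sinv h)
  have hΦ1 : Φ ((1 : P) ⊗ₜ[ℂ] (Sinv h)) = (1 : P) ⊗ₜ[ℂ] h := by
    rw [hΦdef]
    simp only [LinearMap.coe_comp, Function.comp_apply, LinearEquiv.coe_coe,
      TensorProduct.map_tmul, LinearMap.id_coe, id_eq]
    rw [hcoact_one, Algebra.TensorProduct.one_def]
    have h1 : (TensorProduct.assoc ℂ P H H) (((1:P) ⊗ₜ[ℂ] (1:H)) ⊗ₜ[ℂ] Sinv h)
        = (1:P) ⊗ₜ[ℂ] ((1:H) ⊗ₜ[ℂ] Sinv h) := rfl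
    rw [h1, hΨdef]
    simp only [TensorProduct.map_tmul, LinearMap.id_coe, id_eq]
    rw [hΘ_tmul, one_mul, hSdef, hSinv₂]
  -- conclude
  apply hbij.injective
  rw [hχ, hτ]
  rw [hB rep, ← hA rep, hrep', hΦ1, hsPH_tmul]
  simp
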